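/- arXiv:math/0201281 — 2 statements merged into one kernel-verified Lean document; each statement's English description precedes it below -/
import Mathlib

section
/- Let η be a symmetric invertible N×N real matrix with inverse (η_{ij}), and let Φ : U → ℝ be a C³ function on an open set U ⊆ ℝ^N. Define the 'potential' vector field h^i(v) = Σ_j η^{ij} ∂Φ/∂v^j. Then h satisfies the equations Σ_{s,r} η^{sr} (∂²h^j/∂v^s∂v^i)(∂²h^k/∂v^l∂v^r) = Σ_{s,r} η^{sr} (∂²h^k/∂v^s∂v^i)(∂²h^j/∂v^l∂v^r) for all i,j,k,l if and only if Φ satisfies the associativity (WDVV-type) equations Σ_{s,r} (∂³Φ/∂v^p∂v^s∂v^i) η^{sr} (∂³Φ/∂v^q∂v^l∂v^r) = Σ_{s,r} (∂³Φ/∂v^q∂v^s∂v^i) η^{sr} (∂³Φ/∂v^p∂v^l∂v^r) for all i,l,p,q at every point of U. -/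
open Matrix

noncomputable def pdv {N : ℕ} (f : (Fin N → ℝ) → ℝ) (i : Fin N) (v : Fin N → ℝ) : ℝ :=
  fderiv ℝ f v (Pi.single i 1)

noncomputable def pdv2 {N : ℕ} (f : (Fin N → ℝ) → ℝ) (i j : Fin N) (v : Fin N → ℝ) : ℝ :=
  pdv (fun w => pdv f i w) j v

noncomputable def pdv3 {N : ℕ} (f : (Fin N → ℝ) → ℝ) (i j k : Fin N) (v : Fin N → ℝ) : ℝ :=
  pdv (fun w => pdv2 f i j w) k v

lemma pdv_contDiffAt {N : ℕ} {f : (Fin N → ℝ) → ℝ} {v : Fin N → ℝ} {n : ℕ∞}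
    (hf : ContDiffAt ℝ (n+1) f v) (i : Fin N) : ContDiffAt ℝ n (pdv f i) v := by
  have h1 : ContDiffAt ℝ n (fderiv ℝ f) v := hf.fderiv_right (le_refl _)
  exact ((ContinuousLinearMap.apply ℝ ℝ ((Pi.single i 1 : Fin N → ℝ))).contDiff.contDiffAt).comp v h1

lemma pdv_sum_mul {N : ℕ} (c : Fin N → ℝ) (g : Fin N → (Fin N → ℝ) → ℝ) {v : Fin N → ℝ}
    (hg : ∀ m, DifferentiableAt ℝ (g m) v) (i : Fin N) :
    pdv (fun w => ∑ m, c m * g m w) i v = ∑ m, c m * pdv (g m) i v := by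
  unfold pdv
  rw [fderiv_fun_sum (fun m _ => (hg m).const_mul (c m))]
  simp [fderiv_const_mul (hg _)]

lemma pdv_congr_nhds {N : ℕ} {f g : (Fin N → ℝ) → ℝ} {v : Fin N → ℝ}
    (hfg : f =ᶠ[nhds v] g) (i : Fin N) : pdv f i v = pdv g i v := by
  unfold pdv
  rw [hfg.fderiv_eq]

lemma entry_eq1 {N : ℕ} (η P Q : Matrix (Fin N) (Fin N) ℝ) (j k : Fin N) :
    ∑ s, ∑ r, η s r * P j s * Q k r = (P * η * Qᵀ) j k := by
  simp only [Matrix.mul_apply, Matrix.transpose_apply, Finset.sum_mul]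
  rw [Finset.sum_comm]
  refine Finset.sum_congr rfl fun s _ => Finset.sum_congr rfl fun r _ => by ring

lemma entry_eq2 {N : ℕ} (η A B : Matrix (Fin N) (Fin N) ℝ) (p q : Fin N) :
    ∑ s, ∑ r, A p s * η s r * B q r = (A * η * Bᵀ) p q := by
  simp only [Matrix.mul_apply, Matrix.transpose_apply, Finset.sum_mul]
  rw [Finset.sum_comm]

/-- the potential vector field `h^i = Σ_j η^{ij} ∂Φ/∂v^j` satisfies
equations (2.17) iff `Φ` satisfies the associativity (WDVV-type) equations. -/
theorem stmt1 {N : ℕ} (η : Matrix (Fin N) (Fin N) ℝ) (hη : η.IsSymm) (hdet : IsUnit η.det)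
    (U : Set (Fin N → ℝ)) (hU : IsOpen U)
    (Φ : (Fin N → ℝ) → ℝ) (hΦ : ContDiffOn ℝ 3 Φ U)
    (h : Fin N → (Fin N → ℝ) → ℝ)
    (hdef : ∀ i v, h i v = ∑ j, η i j * pdv Φ j v) :
    (∀ v ∈ U, ∀ i j k l : Fin N,
        ∑ s, ∑ r, η s r * pdv2 (h j) s i v * pdv2 (h k) l r v =
        ∑ s, ∑ r, η s r * pdv2 (h k) s i v * pdv2 (h j) l r v)
      ↔ (∀ v ∈ U, ∀ i l p q : Fin N,
        ∑ s, ∑ r, pdv3 Φ p s i v * η s r * pdv3 Φ q l r v =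
        ∑ s, ∑ r, pdv3 Φ q s i v * η s r * pdv3 Φ p l r v) := by
  have hηsym : ηᵀ = η := hη
  have hinv : Invertible η := η.invertibleOfIsUnitDet hdet
  have hΦat : ∀ v ∈ U, ContDiffAt ℝ 3 Φ v := fun v hv => hΦ.contDiffAt (hU.mem_nhds hv)
  have hpdv2diff : ∀ v ∈ U, ∀ m s : Fin N, DifferentiableAt ℝ (pdv2 Φ m s) v := by
    intro v hv m s
    have h2 : ContDiffAt ℝ 2 (pdv Φ m) v := pdv_contDiffAt (by
      have := hΦat v hv; norm_num at this ⊢; exact this) m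
    have h1 : ContDiffAt ℝ 1 (pdv (pdv Φ m) s) v := pdv_contDiffAt (by norm_num at h2 ⊢; exact h2) s
    exact h1.differentiableAt (by norm_num)
  -- key: second derivatives of h in terms of third derivatives of Φ
  have key : ∀ v ∈ U, ∀ j s i : Fin N,
      pdv2 (h j) s i v = ∑ m, η j m * pdv3 Φ m s i v := by
    intro v hv j s i
    have hfun : h j = fun w => ∑ m, η j m * pdv Φ m w := funext fun w => hdef j w
    have stepA : ∀ w ∈ U, pdv (h j) s w = ∑ m, η j m * pdv2 Φ m s w := by
      intro w hw
      rw [hfun]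
      have hdiff : ∀ m, DifferentiableAt ℝ (pdv Φ m) w := by
        intro m
        have h2 : ContDiffAt ℝ 2 (pdv Φ m) w := pdv_contDiffAt (by
          have := hΦat w hw; norm_num at this ⊢; exact this) m
        exact h2.differentiableAt (by norm_num)
      exact pdv_sum_mul (fun m => η j m) (fun m => pdv Φ m) hdiff s
    have heq : (fun w => pdv (h j) s w) =ᶠ[nhds v] (fun w => ∑ m, η j m * pdv2 Φ m s w) :=
      Filter.eventuallyEq_of_mem (hU.mem_nhds hv) stepA
    calc pdv2 (h j) s i v
        = pdv (fun w => pdv (h j) s w) i v := rfl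
      _ = pdv (fun w => ∑ m, η j m * pdv2 Φ m s w) i v := pdv_congr_nhds heq i
      _ = ∑ m, η j m * pdv (pdv2 Φ m s) i v :=
          pdv_sum_mul (fun m => η j m) (fun m => pdv2 Φ m s) (fun m => hpdv2diff v hv m s) i
      _ = ∑ m, η j m * pdv3 Φ m s i v := rfl
  constructor
  · intro H1 v hv i l p q
    set A : Matrix (Fin N) (Fin N) ℝ := Matrix.of fun p s => pdv3 Φ p s i v with hA
    set B : Matrix (Fin N) (Fin N) ℝ := Matrix.of fun q r => pdv3 Φ q l r v with hB
    have eL : ∀ j' s' : Fin N, pdv2 (h j') s' i v = (η * A) j' s' := by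
      intro j' s'; rw [key v hv j' s' i, Matrix.mul_apply]; rfl
    have eR : ∀ k' r' : Fin N, pdv2 (h k') l r' v = (η * B) k' r' := by
      intro k' r'; rw [key v hv k' l r', Matrix.mul_apply]; rfl
    have hrw : η * A * η * (η * B)ᵀ = η * (A * η * Bᵀ) * η := by
      rw [Matrix.transpose_mul, hηsym]; noncomm_ring
    have hsym : η * (A * η * Bᵀ) * η = (η * (A * η * Bᵀ) * η)ᵀ := by
      ext j k
      rw [Matrix.transpose_apply, ← hrw]
      have e1 := H1 v hv i j k l
      simp only [eL, eR, entry_eq1] at e1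
      exact e1
    have hM2 : η * (A * η * Bᵀ) * η = η * (A * η * Bᵀ)ᵀ * η := by
      rw [hsym, Matrix.transpose_mul, Matrix.transpose_mul, hηsym, Matrix.mul_assoc, Matrix.mul_assoc]
    have hMM : A * η * Bᵀ = (A * η * Bᵀ)ᵀ := by
      have h2 := congrArg (fun X => ⅟η * X * ⅟η) hM2
      simpa only [Matrix.mul_assoc, invOf_mul_cancel_left, mul_invOf_self, Matrix.mul_one]
        using h2
    calc ∑ s, ∑ r, pdv3 Φ p s i v * η s r * pdv3 Φ q l r v
        = (A * η * Bᵀ) p q := entry_eq2 η A B p q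
      _ = (A * η * Bᵀ)ᵀ q p := rfl
      _ = (A * η * Bᵀ) q p := by rw [← hMM]
      _ = ∑ s, ∑ r, pdv3 Φ q s i v * η s r * pdv3 Φ p l r v := (entry_eq2 η A B q p).symm
  · intro H2 v hv i j k l
    set A : Matrix (Fin N) (Fin N) ℝ := Matrix.of fun p s => pdv3 Φ p s i v with hA
    set B : Matrix (Fin N) (Fin N) ℝ := Matrix.of fun q r => pdv3 Φ q l r v with hB
    have hMM : A * η * Bᵀ = (A * η * Bᵀ)ᵀ := by
      ext p q
      rw [Matrix.transpose_apply, ← entry_eq2 η A B p q, ← entry_eq2 η A B q p]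
      exact H2 v hv i l p q
    have eL : ∀ j' s' : Fin N, pdv2 (h j') s' i v = (η * A) j' s' := by
      intro j' s'; rw [key v hv j' s' i, Matrix.mul_apply]; rfl
    have eR : ∀ k' r' : Fin N, pdv2 (h k') l r' v = (η * B) k' r' := by
      intro k' r'; rw [key v hv k' l r', Matrix.mul_apply]; rfl
    simp only [eL, eR, entry_eq1]
    have hrw : η * A * η * (η * B)ᵀ = η * (A * η * Bᵀ) * η := by
      rw [Matrix.transpose_mul, hηsym]; noncomm_ring
    rw [hrw]
    have hs : η * (A * η * Bᵀ) * η = (η * (A * η * Bᵀ) * η)ᵀ := by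
      rw [Matrix.transpose_mul, Matrix.transpose_mul, hηsym, ← hMM, Matrix.mul_assoc]
    calc (η * (A * η * Bᵀ) * η) j k
        = (η * (A * η * Bᵀ) * η)ᵀ k j := rfl
      _ = (η * (A * η * Bᵀ) * η) k j := by rw [← hs]
end

section
/- Let η be a symmetric invertible N×N real matrix and suppose the C² vector field h = (h^1,…,h^N) : U → ℝ^N on an open set U ⊆ ℝ^N satisfies both compatibility equations: (i) Σ_{s,r} η^{sr} (∂²h^j/∂v^s∂v^i)(∂²h^k/∂v^l∂v^r) = Σ_{s,r} η^{sr} (∂²h^k/∂v^s∂v^i)(∂²h^j/∂v^l∂v^r) and (ii) Σ_{s,p,l} (η^{ip} ∂h^s/∂v^p + η^{sp} ∂h^i/∂v^p) η^{jl} ∂²h^r/∂v^l∂v^s = Σ_{s,p,l} (η^{jp} ∂h^s/∂v^p + η^{sp} ∂h^j/∂v^p) η^{il} ∂²h^r/∂v^l∂v^s. Then for every real constant λ, the shifted vector field h̃^i(v) = h^i(v) + (λ/2) v^i also satisfies (i) and (ii). -/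
open Matrix

/-- if `h` satisfies conditions (2.17) and (2.18) on `U`, then so does
the shifted vector field `h̃^i(v) = h^i(v) + (λ/2) v^i`. -/
theorem stmt3 {N : ℕ} (η : Matrix (Fin N) (Fin N) ℝ) (hη : η.IsSymm) (hdet : IsUnit η.det)
    (U : Set (Fin N → ℝ)) (hU : IsOpen U)
    (h : Fin N → (Fin N → ℝ) → ℝ) (hh : ∀ i, ContDiffOn ℝ 2 (h i) U)
    (h217 : ∀ v ∈ U, ∀ i j k l : Fin N,
        ∑ s, ∑ r, η s r * pdv2 (h j) s i v * pdv2 (h k) l r v =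
        ∑ s, ∑ r, η s r * pdv2 (h k) s i v * pdv2 (h j) l r v)
    (h218 : ∀ v ∈ U, ∀ i j r : Fin N,
        ∑ s, ∑ p, ∑ l, (η i p * pdv (h s) p v + η s p * pdv (h i) p v) *
            (η j l * pdv2 (h r) l s v) =
        ∑ s, ∑ p, ∑ l, (η j p * pdv (h s) p v + η s p * pdv (h j) p v) *
            (η i l * pdv2 (h r) l s v))
    (lam : ℝ)
    (ht : Fin N → (Fin N → ℝ) → ℝ)
    (htdef : ∀ i v, ht i v = h i v + (lam / 2) * v i) :
    (∀ v ∈ U, ∀ i j k l : Fin N,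
        ∑ s, ∑ r, η s r * pdv2 (ht j) s i v * pdv2 (ht k) l r v =
        ∑ s, ∑ r, η s r * pdv2 (ht k) s i v * pdv2 (ht j) l r v) ∧
    (∀ v ∈ U, ∀ i j r : Fin N,
        ∑ s, ∑ p, ∑ l, (η i p * pdv (ht s) p v + η s p * pdv (ht i) p v) *
            (η j l * pdv2 (ht r) l s v) =
        ∑ s, ∑ p, ∑ l, (η j p * pdv (ht s) p v + η s p * pdv (ht j) p v) *
            (η i l * pdv2 (ht r) l s v)) := by
  set c := lam / 2 with hc
  have hca : ∀ v ∈ U, ∀ i, ContDiffAt ℝ 2 (h i) v :=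
    fun v hv i => (hh i).contDiffAt (hU.mem_nhds hv)
  have hdiff : ∀ v ∈ U, ∀ i, DifferentiableAt ℝ (h i) v :=
    fun v hv i => ((hca v hv i).of_le one_le_two).differentiableAt one_ne_zero
  have hLdef : ∀ i : Fin N, ht i =
      fun w => h i w + (c • (ContinuousLinearMap.proj i :
        (Fin N → ℝ) →L[ℝ] ℝ)) w := by
    intro i; funext w
    simp [htdef, hc]
  have key1 : ∀ v ∈ U, ∀ i p : Fin N,
      pdv (ht i) p v = pdv (h i) p v + c * (Pi.single p 1 : Fin N → ℝ) i := by
    intro v hv i p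
    unfold pdv
    rw [hLdef i, fderiv_fun_add (hdiff v hv i)
      (c • (ContinuousLinearMap.proj i : (Fin N → ℝ) →L[ℝ] ℝ)).differentiableAt,
      ContinuousLinearMap.add_apply,
      (c • (ContinuousLinearMap.proj i : (Fin N → ℝ) →L[ℝ] ℝ)).fderiv]
    simp
  have key2 : ∀ v ∈ U, ∀ i a b : Fin N,
      pdv2 (ht i) a b v = pdv2 (h i) a b v := by
    intro v hv i a b
    have heq : (fun w => pdv (ht i) a w) =ᶠ[nhds v]
        (fun w => pdv (h i) a w + c * (Pi.single a 1 : Fin N → ℝ) i) := by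
      filter_upwards [hU.mem_nhds hv] with w hw using key1 w hw i a
    show fderiv ℝ (fun w => pdv (ht i) a w) v (Pi.single b 1) =
      fderiv ℝ (fun w => pdv (h i) a w) v (Pi.single b 1)
    rw [Filter.EventuallyEq.fderiv_eq heq, fderiv_add_const]
  have hsnd : ∀ v ∈ U, ∀ i a b : Fin N,
      pdv2 (h i) a b v = pdv2 (h i) b a v := by
    intro v hv i a b
    have hsy := (hca v hv i).isSymmSndFDerivAt (by simp)
    have hdf : DifferentiableAt ℝ (fderiv ℝ (h i)) v :=
      ((hca v hv i).fderiv_right (m := 1) le_rfl).differentiableAt one_ne_zero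
    have key : ∀ a b : Fin N, pdv2 (h i) a b v =
        fderiv ℝ (fderiv ℝ (h i)) v (Pi.single b 1) (Pi.single a 1) := by
      intro a b
      unfold pdv2 pdv
      rw [fderiv_clm_apply hdf (differentiableAt_const _)]
      simp
    rw [key a b, key b a, hsy.eq]
  constructor
  · intro v hv i j k l
    simp only [key2 v hv]
    exact h217 v hv i j k l
  · intro v hv i j r
    simp only [key2 v hv, key1 v hv]
    have expand : ∀ a b : Fin N,
        (∑ s, ∑ p, ∑ l, (η a p * (pdv (h s) p v + c * (Pi.single p 1 : Fin N → ℝ) s)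
            + η s p * (pdv (h a) p v + c * (Pi.single p 1 : Fin N → ℝ) a)) *
            (η b l * pdv2 (h r) l s v)) =
        (∑ s, ∑ p, ∑ l, (η a p * pdv (h s) p v + η s p * pdv (h a) p v) *
            (η b l * pdv2 (h r) l s v))
        + 2 * c * ∑ s, ∑ l, η a s * (η b l * pdv2 (h r) l s v) := by
      intro a b
      have collapse : ∀ s : Fin N,
          ∑ p, ∑ l, (η a p * (c * (Pi.single p 1 : Fin N → ℝ) s)
            + η s p * (c * (Pi.single p 1 : Fin N → ℝ) a)) * (η b l * pdv2 (h r) l s v) =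
          ∑ l, 2 * c * (η a s * (η b l * pdv2 (h r) l s v)) := by
        intro s
        rw [Finset.sum_comm]
        apply Finset.sum_congr rfl
        intro l _
        simp only [Pi.single_apply, mul_ite, mul_one, mul_zero, ite_mul, zero_mul,
          add_mul, Finset.sum_add_distrib, Finset.sum_ite_eq, Finset.mem_univ, if_true]
        rw [hη.apply a s]
        ring
      calc (∑ s, ∑ p, ∑ l, (η a p * (pdv (h s) p v + c * (Pi.single p 1 : Fin N → ℝ) s)
            + η s p * (pdv (h a) p v + c * (Pi.single p 1 : Fin N → ℝ) a)) *
            (η b l * pdv2 (h r) l s v))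
          = ∑ s, ((∑ p, ∑ l, (η a p * pdv (h s) p v + η s p * pdv (h a) p v) *
              (η b l * pdv2 (h r) l s v))
            + ∑ l, 2 * c * (η a s * (η b l * pdv2 (h r) l s v))) := by
            apply Finset.sum_congr rfl
            intro s _
            rw [← collapse s, ← Finset.sum_add_distrib]
            apply Finset.sum_congr rfl
            intro p _
            rw [← Finset.sum_add_distrib]
            apply Finset.sum_congr rfl
            intro l _
            ring
        _ = (∑ s, ∑ p, ∑ l, (η a p * pdv (h s) p v + η s p * pdv (h a) p v) *
              (η b l * pdv2 (h r) l s v))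
            + 2 * c * ∑ s, ∑ l, η a s * (η b l * pdv2 (h r) l s v) := by
            rw [Finset.sum_add_distrib]
            congr 1
            simp [Finset.mul_sum]
    rw [expand i j, expand j i]
    have hswap : (∑ s, ∑ l, η i s * (η j l * pdv2 (h r) l s v)) =
        ∑ s, ∑ l, η j s * (η i l * pdv2 (h r) l s v) := by
      rw [Finset.sum_comm]
      apply Finset.sum_congr rfl
      intro x _
      apply Finset.sum_congr rfl
      intro y _
      rw [hsnd v hv r x y]
      ring
    rw [h218 v hv i j r, hswap]
end
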